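/- There is no infinite binary word that simultaneously avoids all squares yy with |y| ≥ 3 and all cubes xxx; in fact, every binary word of length at least 30 contains either a square yy with |y| ≥ 3 or a cube. -/

import Mathlib

/-- `x` occurs as a factor (contiguous subword) of the infinite word `w`. -/
def FactorOf {α : Type*} (x : List α) (w : ℕ → α) : Prop :=
  ∃ i, x = (List.range x.length).map (fun j => w (i + j))

def BadSuf (p : List (Fin 2)) : Prop := ∃ l < p.length + 1,
  (3 ≤ l ∧ 2*l ≤ p.length ∧
    (p.drop (p.length - 2*l)).take l = (p.drop (p.length - l)).take l) ∨
  (1 ≤ l ∧ 3*l ≤ p.length ∧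
    (p.drop (p.length - 3*l)).take l = (p.drop (p.length - 2*l)).take l ∧
    (p.drop (p.length - 2*l)).take l = (p.drop (p.length - l)).take l)

instance : DecidablePred BadSuf := fun p => by unfold BadSuf; infer_instance

def goods : ℕ → List (List (Fin 2))
  | 0 => [[]]
  | n+1 => ((goods n).flatMap (fun w => [w ++ [0], w ++ [1]])).filter
      (fun v => !decide (BadSuf v))

set_option maxRecDepth 100000 in
set_option maxHeartbeats 1000000 in
lemma goods30 : goods 30 = [] := by decide

def Has (w : List (Fin 2)) : Prop :=
  (∃ y : List (Fin 2), 3 ≤ y.length ∧ (y ++ y) <:+: w) ∨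
  (∃ x : List (Fin 2), x ≠ [] ∧ (x ++ x ++ x) <:+: w)

lemma infix_take_drop (w : List (Fin 2)) (i l : ℕ) : (w.drop i).take l <:+: w :=
  ((List.take_prefix _ _).isInfix).trans ((List.drop_suffix _ _).isInfix)

lemma badSuf_has {p : List (Fin 2)} (h : BadSuf p) : Has p := by
  obtain ⟨l, _, h | h⟩ := h
  · obtain ⟨h3, h2l, heq⟩ := h
    set i := p.length - 2*l with hi
    left
    refine ⟨(p.drop i).take l, ?_, ?_⟩
    · simp [List.length_take, List.length_drop]; omega
    · have e1 : p.length - l = i + l := by omega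
      rw [e1] at heq
      have key : (p.drop i).take l ++ (p.drop i).take l = (p.drop i).take (l + l) := by
        rw [List.take_add, List.drop_drop, ← heq]
      rw [key]; exact infix_take_drop _ _ _
  · obtain ⟨h1, h3l, heq1, heq2⟩ := h
    set i := p.length - 3*l with hi
    right
    refine ⟨(p.drop i).take l, ?_, ?_⟩
    · intro hnil
      have := congrArg List.length hnil
      simp [List.length_take, List.length_drop] at this
      omega
    · have e1 : p.length - 2*l = i + l := by omega
      have e2 : p.length - l = i + 2*l := by omega
      rw [e1] at heq1 heq2
      rw [e2] at heq2
      have key : (p.drop i).take l ++ (p.drop i).take l ++ (p.drop i).take l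
          = (p.drop i).take (l + l + l) := by
        rw [List.take_add, List.take_add, List.drop_drop, List.drop_drop,
          show i + (l + l) = i + 2*l from by omega, ← heq2, ← heq1]
      rw [key]; exact infix_take_drop _ _ _

lemma has_mono {v w : List (Fin 2)} (h : Has v) (hvw : v <:+: w) : Has w := by
  rcases h with ⟨y, hy, hinf⟩ | ⟨x, hx, hinf⟩
  · exact Or.inl ⟨y, hy, hinf.trans hvw⟩
  · exact Or.inr ⟨x, hx, hinf.trans hvw⟩

lemma fin2_cases (a : Fin 2) : a = 0 ∨ a = 1 := by omega

lemma mem_goods : ∀ n (w : List (Fin 2)), w.length = n →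
    (∀ p, p <+: w → ¬ BadSuf p) → w ∈ goods n := by
  intro n
  induction n with
  | zero => intro w hw _; simp [goods, List.length_eq_zero_iff.mp hw]
  | succ n ih =>
    intro w hw hgood
    have hne : w ≠ [] := by intro h; simp [h] at hw
    have hsplit : w.dropLast ++ [w.getLast hne] = w := List.dropLast_append_getLast hne
    have hdl : w.dropLast ∈ goods n := by
      apply ih
      · simp [List.length_dropLast, hw]
      · intro p hp
        exact hgood p (hp.trans (List.dropLast_prefix w))
    simp only [goods, List.mem_filter, List.mem_flatMap]
    constructor
    · refine ⟨w.dropLast, hdl, ?_⟩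
      rcases fin2_cases (w.getLast hne) with h0 | h0
      · exact List.mem_cons.mpr (Or.inl (by conv_lhs => rw [← hsplit, h0]))
      · exact List.mem_cons.mpr (Or.inr (List.mem_cons.mpr
          (Or.inl (by conv_lhs => rw [← hsplit, h0]))))
    · simpa using hgood w (List.prefix_refl w)

lemma has_of_long (w : List (Fin 2)) (hw : 30 ≤ w.length) : Has w := by
  by_contra hno
  have hv : (w.take 30).length = 30 := by simp [hw]
  have : w.take 30 ∈ goods 30 := by
    apply mem_goods _ _ hv
    intro p hp hbs
    exact hno (has_mono (badSuf_has hbs) ((hp.trans (List.take_prefix _ _)).isInfix))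
  rw [goods30] at this
  exact List.not_mem_nil this

lemma factor_of_infix {n : ℕ} {w : ℕ → Fin 2} {u : List (Fin 2)}
    (h : u <:+: (List.range n).map (fun j => w j)) : FactorOf u w := by
  obtain ⟨s, t, hst⟩ := h
  refine ⟨s.length, ?_⟩
  apply List.ext_getElem
  · simp
  · intro j h1 h2
    have hlen : s.length + (u.length + t.length) = n := by
      have := congrArg List.length hst
      simpa [List.length_append] using this
    have hjn : s.length + j < n := by omega
    have step3 : u[j] = (s ++ (u ++ t))[s.length + j]'(by simp; omega) := by
      rw [List.getElem_append_right (by omega)]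
      simp only [Nat.add_sub_cancel_left]
      exact (List.getElem_append_left _).symm
    have hst' : s ++ (u ++ t) = (List.range n).map (fun j => w j) := by
      rw [← List.append_assoc]; exact hst
    rw [step3]
    simp only [hst']
    rw [List.getElem_map, List.getElem_map, List.getElem_range, List.getElem_range]

theorem no_infinite_word_avoiding_squares_ge_three_and_cubes :
    (∀ w : ℕ → Fin 2,
      (∃ y : List (Fin 2), 3 ≤ y.length ∧ FactorOf (y ++ y) w) ∨
      (∃ x : List (Fin 2), x ≠ [] ∧ FactorOf (x ++ x ++ x) w)) ∧
    (∀ w : List (Fin 2), 30 ≤ w.length →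
      (∃ y : List (Fin 2), 3 ≤ y.length ∧ (y ++ y) <:+: w) ∨
      (∃ x : List (Fin 2), x ≠ [] ∧ (x ++ x ++ x) <:+: w)) := by
  constructor
  · intro w
    rcases has_of_long ((List.range 30).map (fun j => w j)) (by simp) with
      ⟨y, hy, hinf⟩ | ⟨x, hx, hinf⟩
    · exact Or.inl ⟨y, hy, factor_of_infix hinf⟩
    · exact Or.inr ⟨x, hx, factor_of_infix hinf⟩
  · intro w hw
    exact has_of_long w hw
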